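/- Let G be a group. For every pair (g,h) ∈ G², the map τ_{g,h} : CO(G) → ℝ defined by τ_{g,h}(c) = τ_c(g,h) is continuous, where CO(G) carries the subspace topology from the product topology on {0,±1}^{G³}. -/

import Mathlib

namespace Paper

variable {G : Type*} [Group G]

/-- A left-invariant circular ordering of a group `G`, as a function `G³ → {0, ±1} ⊆ ℤ`. -/
def IsCircOrd (c : G → G → G → ℤ) : Prop :=
  (∀ g₁ g₂ g₃ : G, c g₁ g₂ g₃ = 0 ↔ (g₁ = g₂ ∨ g₁ = g₃ ∨ g₂ = g₃)) ∧
  (∀ g₁ g₂ g₃ : G, c g₁ g₂ g₃ = 0 ∨ c g₁ g₂ g₃ = 1 ∨ c g₁ g₂ g₃ = -1) ∧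
  (∀ g₁ g₂ g₃ g₄ : G, c g₂ g₃ g₄ - c g₁ g₃ g₄ + c g₁ g₂ g₄ - c g₁ g₂ g₃ = 0) ∧
  (∀ g g₁ g₂ g₃ : G, c (g*g₁) (g*g₂) (g*g₃) = c g₁ g₂ g₃)

/-- The space CO(G) of circular orderings, topologized as a subspace of `ℤ^{G³}`
(all relevant values lie in the discrete set `{0,±1}`, and `ℤ` carries the discrete
topology, so this is the subspace topology from the product topology on `{0,±1}^{G³}`). -/
abbrev CircOrd (G : Type*) [Group G] := {c : G → G → G → ℤ // IsCircOrd c}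

open Classical in
/-- The cocycle `f_c`: `f_c(g,h) = 0` if `g = 1` or `h = 1` or `c(1,g,gh) = 1`,
and `f_c(g,h) = 1` otherwise (i.e. when `gh = 1 ≠ g`, or `c(1,gh,g) = 1`). -/
noncomputable def fc (c : G → G → G → ℤ) (g h : G) : ℤ :=
  if g = 1 ∨ h = 1 ∨ c 1 g (g*h) = 1 then 0 else 1

/-- Multiplication in the central extension `G̃_c = G × ℤ`:
`(g,n)(h,m) = (gh, n+m+f_c(g,h))`. -/
noncomputable def liftMul (c : G → G → G → ℤ) (x y : G × ℤ) : G × ℤ :=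
  (x.1 * y.1, x.2 + y.2 + fc c x.1 y.1)

/-- Powers (with natural number exponents) in `G̃_c`. -/
noncomputable def liftPow (c : G → G → G → ℤ) (x : G × ℤ) : ℕ → G × ℤ
  | 0 => (1, 0)
  | n+1 => liftMul c (liftPow c x n) x

/-- `[h]_c`: the unique integer `k` with `z_c^k ≤_c h <_c z_c^{k+1}`, where `<_c` is the
left-ordering of `G̃_c` with positive cone `{(g,n) : n ≥ 0} ∖ {(1,0)}` and `z_c = (1,1)`.
Since `z_c^k = (1,k)` and `f_c(g,g⁻¹) = 1` for `g ≠ 1`, this is exactly the second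
coordinate of `h`. -/
def liftFloor (h : G × ℤ) : ℤ := h.2

/-- The translation number `r̃ot_c(h)` of `h ∈ G̃_c`: the limit of `[hⁿ]_c / n`
(`limUnder` picks out the limit when it exists). -/
noncomputable def rotTilde (c : G → G → G → ℤ) (h : G × ℤ) : ℝ :=
  Filter.limUnder Filter.atTop (fun n : ℕ => (liftFloor (liftPow c h n) : ℝ) / (n : ℝ))

/-- The rotation number `rot_c(g) ∈ ℝ/ℤ`, computed using the lift `(g,0) ∈ G̃_c`
(it is independent of the choice of lift). -/
noncomputable def rotc (c : G → G → G → ℤ) (g : G) : AddCircle (1:ℝ) :=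
  ((rotTilde c (g, 0) : ℝ) : AddCircle (1:ℝ))

/-- `τ_c(g,h) = r̃ot_c(g̃h̃) − r̃ot_c(g̃) − r̃ot_c(h̃)`, computed using the lifts `(g,0)`
and `(h,0)` (it is independent of the choice of lifts). -/
noncomputable def tauc (c : G → G → G → ℤ) (g h : G) : ℝ :=
  rotTilde c (liftMul c (g,0) (h,0)) - rotTilde c (g,0) - rotTilde c (h,0)

/-- A positive cone of a group `G`: `P · P ⊆ P` and `P ∪ P⁻¹ = G ∖ {1}`.
It determines a left-ordering by `g < h` iff `g⁻¹h ∈ P`. -/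
def IsPositiveCone (P : Set G) : Prop :=
  (∀ a ∈ P, ∀ b ∈ P, a * b ∈ P) ∧ (P ∪ P⁻¹ = {g : G | g ≠ 1})

/-- The left-ordering determined by a positive cone. -/
def coneLt (P : Set G) (a b : G) : Prop := a⁻¹ * b ∈ P

open Classical in
/-- The secret left-ordering `c_<` determined by a positive cone `P`:
`c_<(a,b,c) = sign σ` where `σ` is the permutation sorting `(a,b,c)` into increasing
order, i.e. `c_< = 1` on positively cyclically ordered triples, `-1` on negatively
cyclically ordered triples, and `0` when the entries are not all distinct. -/
noncomputable def circOfCone (P : Set G) : G → G → G → ℤ := fun a b c =>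
  if (coneLt P a b ∧ coneLt P b c) ∨ (coneLt P b c ∧ coneLt P c a) ∨
      (coneLt P c a ∧ coneLt P a b) then 1
  else if (coneLt P c b ∧ coneLt P b a) ∨ (coneLt P b a ∧ coneLt P a c) ∨
      (coneLt P a c ∧ coneLt P c b) then -1
  else 0

/-- A circular ordering is a *secret left-ordering* if it is `c_<` for some
left-ordering `<` of `G`. -/
def IsSecret (c : G → G → G → ℤ) : Prop := ∃ P : Set G, IsPositiveCone P ∧ c = circOfCone P


lemma fc_one_left (c : G → G → G → ℤ) (h : G) : fc c 1 h = 0 := by simp [fc]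
lemma fc_one_right (c : G → G → G → ℤ) (g : G) : fc c g 1 = 0 := by simp [fc]
lemma fc_bound (c : G → G → G → ℤ) (g h : G) : fc c g h = 0 ∨ fc c g h = 1 := by
  unfold fc; split_ifs <;> simp

open Classical in
lemma fc_cocycle {c : G → G → G → ℤ} (hc : IsCircOrd c) (g h k : G) :
    fc c g h + fc c (g*h) k = fc c h k + fc c g (h*k) := by
  by_cases hg : g = 1
  · subst hg; simp [fc_one_left, one_mul]
  by_cases hh : h = 1
  · subst hh; simp [fc_one_left, fc_one_right, mul_one, one_mul]
  by_cases hk : k = 1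
  · subst hk; simp [fc_one_right, mul_one]
  obtain ⟨hzero, hrange, hcoc, hinv⟩ := hc
  have inv1 : c g (g*h) (g*h*k) = c 1 h (h*k) := by
    have := hinv g 1 h (h*k); simpa [mul_assoc] using this
  have rel0 := hcoc 1 g (g*h) (g*h*k)
  rw [inv1] at rel0
  set A := c 1 h (h*k) with hA
  set B := c 1 (g*h) (g*h*k) with hB
  set C := c 1 g (g*h*k) with hC
  set D := c 1 g (g*h) with hD
  -- zero characterizations
  have hA0 : A = 0 ↔ h*k = 1 := by
    rw [hA, hzero]
    constructor
    · rintro (e | e | e)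
      · exact absurd e.symm hh
      · exact e.symm
      · exact absurd (by simpa using (left_eq_mul.mp e)) hk
    · intro e; exact Or.inr (Or.inl e.symm)
  have hD0 : D = 0 ↔ g*h = 1 := by
    rw [hD, hzero]
    constructor
    · rintro (e | e | e)
      · exact absurd e.symm hg
      · exact e.symm
      · exact absurd (by simpa using (left_eq_mul.mp e)) hh
    · intro e; exact Or.inr (Or.inl e.symm)
  have hB0 : B = 0 ↔ (g*h = 1 ∨ g*h*k = 1) := by
    rw [hB, hzero]
    constructor
    · rintro (e | e | e)
      · exact Or.inl e.symm
      · exact Or.inr e.symm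
      · exact absurd (by simpa using (left_eq_mul.mp e)) hk
    · rintro (e | e)
      · exact Or.inl e.symm
      · exact Or.inr (Or.inl e.symm)
  have hC0 : C = 0 ↔ (g*h*k = 1 ∨ h*k = 1) := by
    rw [hC, hzero]
    constructor
    · rintro (e | e | e)
      · exact absurd e.symm hg
      · exact Or.inl e.symm
      · exact Or.inr (by simpa [mul_assoc] using (left_eq_mul (a := g)).mp (by rw [← mul_assoc]; exact e))
    · rintro (e | e)
      · exact Or.inr (Or.inl e.symm)
      · refine Or.inr (Or.inr ?_); rw [mul_assoc, e, mul_one]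
  -- express the four fc values
  have e1 : fc c g h = if D = 1 then 0 else 1 := by
    simp only [fc, hg, hh, false_or, ← hD]
  have e2 : fc c (g*h) k = if g*h = 1 ∨ B = 1 then 0 else 1 := by
    simp only [fc, hk, false_or, ← hB]
  have e3 : fc c h k = if A = 1 then 0 else 1 := by
    simp only [fc, hh, hk, false_or, ← hA]
  have e4 : fc c g (h*k) = if h*k = 1 ∨ C = 1 then 0 else 1 := by
    simp only [fc, hg, false_or, ← mul_assoc, ← hC]
  rw [e1, e2, e3, e4]
  rw [show ((g*h = 1) = (D = 0)) from propext hD0.symm,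
      show ((h*k = 1) = (A = 0)) from propext hA0.symm]
  simp only [show ((g*h = 1) = (D = 0)) from propext hD0.symm,
      show ((h*k = 1) = (A = 0)) from propext hA0.symm] at hB0 hC0
  have rA := hrange 1 h (h*k); rw [← hA] at rA
  have rB := hrange 1 (g*h) (g*h*k); rw [← hB] at rB
  have rC := hrange 1 g (g*h*k); rw [← hC] at rC
  have rD := hrange 1 g (g*h); rw [← hD] at rD
  by_cases E : g*h*k = 1 <;>
    [ (simp only [E, or_true, true_or, iff_true] at hB0 hC0);
      (simp only [E, or_false, false_or] at hB0 hC0) ] <;>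
    split_ifs <;> omega

lemma liftMul_assoc {c : G → G → G → ℤ} (hc : IsCircOrd c) (x y z : G × ℤ) :
    liftMul c (liftMul c x y) z = liftMul c x (liftMul c y z) := by
  have := fc_cocycle hc x.1 y.1 z.1
  simp only [liftMul, Prod.mk.injEq]
  refine ⟨mul_assoc _ _ _, by omega⟩

lemma liftMul_one {c : G → G → G → ℤ} (x : G × ℤ) :
    liftMul c x (1, 0) = x := by
  simp [liftMul, fc_one_right]

lemma liftPow_add {c : G → G → G → ℤ} (hc : IsCircOrd c) (x : G × ℤ) (n m : ℕ) :
    liftPow c x (n + m) = liftMul c (liftPow c x n) (liftPow c x m) := by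
  induction m with
  | zero => simp [liftPow, liftMul_one]
  | succ m ih =>
      show liftPow c x ((n + m) + 1) = _
      rw [show liftPow c x ((n+m)+1) = liftMul c (liftPow c x (n+m)) x from rfl, ih,
        liftMul_assoc hc]
      rfl

lemma liftPow_fst (c : G → G → G → ℤ) (x : G × ℤ) (n : ℕ) :
    (liftPow c x n).1 = x.1 ^ n := by
  induction n with
  | zero => simp [liftPow]
  | succ n ih => rw [show liftPow c x (n+1) = liftMul c (liftPow c x n) x from rfl, pow_succ]
                 simp [liftMul, ih]

lemma liftPow_snd_super {c : G → G → G → ℤ} (hc : IsCircOrd c) (x : G × ℤ) (n m : ℕ) :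
    (liftPow c x n).2 + (liftPow c x m).2 ≤ (liftPow c x (n+m)).2 ∧
    (liftPow c x (n+m)).2 ≤ (liftPow c x n).2 + (liftPow c x m).2 + 1 := by
  rw [liftPow_add hc]
  have := fc_bound c (liftPow c x n).1 (liftPow c x m).1
  simp only [liftMul]
  omega

lemma rotTilde_bounds {c : G → G → G → ℤ} (hc : IsCircOrd c) (x : G × ℤ) {n : ℕ}
    (hn : n ≠ 0) :
    ((liftPow c x n).2 : ℝ) / n ≤ rotTilde c x ∧
      rotTilde c x ≤ (((liftPow c x n).2 : ℝ) + 1) / n := by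
  set a : ℕ → ℤ := fun n => (liftPow c x n).2 with ha
  have a0 : a 0 = 0 := rfl
  have hsuper : ∀ p q, a p + a q ≤ a (p+q) := fun p q => (liftPow_snd_super hc x p q).1
  have hsubad : ∀ p q, a (p+q) ≤ a p + a q + 1 := fun p q => (liftPow_snd_super hc x p q).2
  set u : ℕ → ℝ := fun p => (a p : ℝ) + 1 with hu
  have hsub : Subadditive u := by
    intro p q
    have h' : ((a (p+q) : ℝ)) ≤ (a p : ℝ) + (a q : ℝ) + 1 := by exact_mod_cast hsubad p q
    simp only [hu]
    linarith
  -- lower bound on a p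
  have hlin : ∀ p : ℕ, (p : ℤ) * a 1 ≤ a p := by
    intro p
    induction p with
    | zero => simp [a0]
    | succ p ih =>
        have := hsuper p 1
        push_cast
        linarith
  have hbdd : BddBelow (Set.range fun p : ℕ => u p / p) := by
    refine ⟨min ((a 1 : ℝ)) 0, ?_⟩
    rintro _ ⟨p, rfl⟩
    rcases Nat.eq_zero_or_pos p with hp | hp
    · subst hp; simp
    · have hp' : (0:ℝ) < p := by exact_mod_cast hp
      have h1 : ((p:ℝ) * (a 1 : ℝ)) ≤ (a p : ℝ) := by exact_mod_cast hlin p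
      have : (a 1 : ℝ) ≤ u p / p := by
        rw [le_div_iff₀ hp']
        simp only [hu]
        nlinarith
      exact le_trans (min_le_left _ _) this
  have htend : Filter.Tendsto (fun p : ℕ => u p / p) Filter.atTop (nhds hsub.lim) :=
    hsub.tendsto_lim hbdd
  have htend' : Filter.Tendsto (fun p : ℕ => (a p : ℝ) / p) Filter.atTop (nhds hsub.lim) := by
    have h2 : Filter.Tendsto (fun p : ℕ => (1:ℝ) / p) Filter.atTop (nhds 0) :=
      tendsto_one_div_atTop_nhds_zero_nat
    have := htend.sub h2
    rw [sub_zero] at this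
    refine this.congr fun p => ?_
    simp only [hu]
    rw [← sub_div]
    ring_nf
  have hrot : rotTilde c x = hsub.lim := htend'.limUnder_eq
  constructor
  · -- lower bound
    rw [hrot]
    have hmul : ∀ k : ℕ, (k : ℤ) * a n ≤ a (k * n) := by
      intro k
      induction k with
      | zero => simp [a0]
      | succ k ih =>
          have := hsuper (k*n) n
          have e : (k+1) * n = k*n + n := by ring
          rw [e]
          push_cast
          linarith
    have hsub2 : Filter.Tendsto (fun k : ℕ => k * n) Filter.atTop Filter.atTop := by
      apply Filter.tendsto_atTop_atTop.2
      intro b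
      exact ⟨b, fun a hab => le_trans hab (Nat.le_mul_of_pos_right a (Nat.pos_of_ne_zero hn))⟩
    have htend2 : Filter.Tendsto (fun k : ℕ => (a (k*n) : ℝ) / (k*n : ℕ)) Filter.atTop
        (nhds hsub.lim) := htend'.comp hsub2
    refine ge_of_tendsto htend2 ?_
    filter_upwards [Filter.eventually_ge_atTop 1] with k hk
    have hk0 : (0:ℝ) < k := by exact_mod_cast hk
    have hn0 : (0:ℝ) < n := by exact_mod_cast Nat.pos_of_ne_zero hn
    have h1 : ((k:ℝ) * (a n : ℝ)) ≤ (a (k*n) : ℝ) := by exact_mod_cast hmul k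
    have e : ((k*n : ℕ) : ℝ) = (k:ℝ) * n := by push_cast; ring
    rw [e]
    rw [div_le_div_iff₀ hn0 (by positivity)]
    nlinarith
  · rw [hrot]
    have := hsub.lim_le_div hbdd hn
    simpa [hu] using this

open Classical in
lemma cont_fc (a b : G) : Continuous fun c : CircOrd G => fc c.1 a b := by
  have h1 : Continuous fun c : CircOrd G => c.1 1 a (a*b) := by
    have e0 : Continuous fun c : CircOrd G => (c.1 : G → G → G → ℤ) :=
      continuous_subtype_val
    exact (continuous_apply (a*b)).comp ((continuous_apply a).comp
      ((continuous_apply (1:G)).comp e0))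
  have h2 : Continuous fun t : ℤ => if a = 1 ∨ b = 1 ∨ t = 1 then (0:ℤ) else 1 :=
    continuous_of_discreteTopology
  exact h2.comp h1

lemma cont_snd (w : G) (e : CircOrd G → ℤ) (he : Continuous e) (n : ℕ) :
    Continuous fun c : CircOrd G => (liftPow c.1 (w, e c) n).2 := by
  induction n with
  | zero => exact continuous_const
  | succ n ih =>
      have heq : (fun c : CircOrd G => (liftPow c.1 (w, e c) (n+1)).2)
          = fun c => (liftPow c.1 (w, e c) n).2 + e c + fc c.1 (w ^ n) w := by
        funext c
        rw [show liftPow c.1 (w, e c) (n+1) = liftMul c.1 (liftPow c.1 (w, e c) n) (w, e c)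
          from rfl]
        simp [liftMul, liftPow_fst]
      rw [heq]
      exact (ih.add he).add (cont_fc _ _)

private theorem stmt7_aux (g h : G) :
    Continuous (fun c : CircOrd G => tauc c.1 g h) := by
  set F : ℕ → CircOrd G → ℝ := fun n c =>
    (((liftPow c.1 (liftMul c.1 (g,0) (h,0)) (n+1)).2 : ℝ)
      - ((liftPow c.1 (g,0) (n+1)).2 : ℝ)
      - ((liftPow c.1 (h,0) (n+1)).2 : ℝ)) / ((n:ℝ)+1) with hF
  have hcont : ∀ n, Continuous (F n) := by
    intro n
    have c1 : Continuous fun c : CircOrd G =>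
        (liftPow c.1 (liftMul c.1 (g,0) (h,0)) (n+1)).2 :=
      cont_snd (g*h) (fun c : CircOrd G => 0 + 0 + fc c.1 g h)
        (by simpa using cont_fc g h) (n+1)
    have c2 : Continuous fun c : CircOrd G => (liftPow c.1 (g,0) (n+1)).2 :=
      cont_snd g (fun _ => 0) continuous_const (n+1)
    have c3 : Continuous fun c : CircOrd G => (liftPow c.1 (h,0) (n+1)).2 :=
      cont_snd h (fun _ => 0) continuous_const (n+1)
    have cast1 : Continuous fun t : ℤ => (t : ℝ) := continuous_of_discreteTopology
    rw [hF]
    exact (((cast1.comp c1).sub (cast1.comp c2)).sub (cast1.comp c3)).div_const _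
  have hbound : ∀ (n : ℕ) (c : CircOrd G), |tauc c.1 g h - F n c| ≤ 3 / ((n:ℝ)+1) := by
    intro n c
    have hn : (n+1 : ℕ) ≠ 0 := Nat.succ_ne_zero n
    have b1 := rotTilde_bounds c.2 (liftMul c.1 (g,0) (h,0)) hn
    have b2 := rotTilde_bounds c.2 ((g,(0:ℤ))) hn
    have b3 := rotTilde_bounds c.2 ((h,(0:ℤ))) hn
    have hNe : ((n+1 : ℕ) : ℝ) = (n:ℝ)+1 := by push_cast; ring
    rw [hNe] at b1 b2 b3
    simp only [hF, tauc]
    set N : ℝ := (n:ℝ)+1 with hN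
    set A : ℝ := ((liftPow c.1 (liftMul c.1 (g,0) (h,0)) (n+1)).2 : ℝ) with hA
    set B : ℝ := ((liftPow c.1 ((g:G),(0:ℤ)) (n+1)).2 : ℝ) with hB
    set C : ℝ := ((liftPow c.1 ((h:G),(0:ℤ)) (n+1)).2 : ℝ) with hC
    obtain ⟨l1, u1⟩ := b1; obtain ⟨l2, u2⟩ := b2; obtain ⟨l3, u3⟩ := b3
    have eu1 : (A+1)/N = A/N + 1/N := by ring
    have eu2 : (B+1)/N = B/N + 1/N := by ring
    have eu3 : (C+1)/N = C/N + 1/N := by ring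
    rw [eu1] at u1; rw [eu2] at u2; rw [eu3] at u3
    have eF : (A - B - C)/N = A/N - B/N - C/N := by ring
    have e3 : (3:ℝ)/N = 1/N + 1/N + 1/N := by ring
    have hNinv : (0:ℝ) ≤ 1/N := by positivity
    rw [eF, e3, abs_le]
    constructor <;> linarith
  have huniform : TendstoUniformly F (fun c : CircOrd G => tauc c.1 g h) Filter.atTop := by
    rw [Metric.tendstoUniformly_iff]
    intro ε hε
    have htend : Filter.Tendsto (fun n : ℕ => 3 / ((n:ℝ)+1)) Filter.atTop (nhds 0) := by
      apply Filter.Tendsto.div_atTop (tendsto_const_nhds)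
      exact Filter.tendsto_atTop_add_const_right _ 1 tendsto_natCast_atTop_atTop
    filter_upwards [htend.eventually (gt_mem_nhds hε)] with n hnε c
    rw [Real.dist_eq]
    calc |tauc c.1 g h - F n c| ≤ 3 / ((n:ℝ)+1) := hbound n c
      _ < ε := hnε
  exact huniform.continuous (Filter.Frequently.of_forall hcont)

/-- Proposition 4.14: for each pair `(g,h) ∈ G²`, the map `τ_{g,h} : CO(G) → ℝ`,
`τ_{g,h}(c) = τ_c(g,h)`, is continuous. -/
theorem stmt7 (g h : G) :
    Continuous (fun c : CircOrd G => tauc c.1 g h) :=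
  stmt7_aux g h

end Paper
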